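/- arXiv:1508.06620 — 3 statements merged into one kernel-verified Lean document; each statement's English description precedes it below -/
import Mathlib

section
/- Let X be an infinite set, Y a linear order, and g : X × Y → Y a function such that g(x,y) ≤ y for all x, y, for each y the map x ↦ g(x,y) is onto {z : z ≤ y}, and for each pair z < y the fiber {x ∈ X : g(x,y) = z} is finite and nonempty. Then |Y| ≤ |X|⁺. -/
open Cardinal

universe u

theorem stmt3 {X Y : Type u} [Infinite X] [LinearOrder Y] (g : X → Y → Y)
    (h1 : ∀ (x : X) (y : Y), g x y ≤ y)
    (h2 : ∀ y z : Y, z ≤ y → ∃ x : X, g x y = z)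
    (h3 : ∀ y z : Y, z < y → ({x : X | g x y = z}).Finite ∧ ({x : X | g x y = z}).Nonempty) :
    #Y ≤ Order.succ #X := by
  classical
  -- Every initial segment has cardinality at most #X.
  have hseg : ∀ y : Y, #(Set.Iic y) ≤ #X := by
    intro y
    have hsurj : Function.Surjective (fun x : X => (⟨g x y, h1 x y⟩ : Set.Iic y)) := by
      rintro ⟨z, hz⟩
      obtain ⟨x, hx⟩ := h2 y z hz
      exact ⟨x, Subtype.ext hx⟩
    exact Cardinal.mk_le_of_surjective hsurj
  rcases isEmpty_or_nonempty Y with hY | hY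
  · rw [Cardinal.mk_eq_zero Y]
    exact zero_le
  -- a well-ordered cofinal subset
  set r : Y → Y → Prop := WellOrderingRel with hr
  haveI : IsWellOrder Y r := WellOrderingRel.isWellOrder
  set C : Set Y := {y | ∀ z, r z y → z ≤ y} with hC
  have hcof : ∀ y : Y, ∃ c ∈ C, y ≤ c := by
    intro y
    have hne : {z : Y | y ≤ z}.Nonempty := ⟨y, le_refl y⟩
    set c := (IsWellFounded.wf (r := r)).min {z : Y | y ≤ z} hne with hc
    have hycmem : c ∈ {z : Y | y ≤ z} := (IsWellFounded.wf (r := r)).min_mem _ hne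
    refine ⟨c, ?_, hycmem⟩
    intro z hz
    by_contra hzc
    have hcz : c < z := lt_of_not_ge hzc
    have hzmem : z ∈ {z : Y | y ≤ z} := le_trans hycmem hcz.le
    exact (IsWellFounded.wf (r := r)).not_lt_min _ hzmem hz
  -- < on C is a subrelation of r, hence well-founded
  have hsub : ∀ a b : ↥C, a < b → r a.val b.val := by
    intro a b hab
    rcases trichotomous_of r a.val b.val with h | h | h
    · exact h
    · exact absurd (Subtype.ext h) (ne_of_lt hab)
    · exact absurd (a.2 b.val h) (not_le_of_gt hab)
  haveI : WellFoundedLT ↥C := by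
    constructor
    exact Subrelation.wf (fun {a b} h => hsub a b h)
      (InvImage.wf (fun a : ↥C => a.val) (IsWellFounded.wf (r := r)))
  -- Cardinality of C is at most succ #X via its order type
  set o := Ordinal.type ((· < ·) : ↥C → ↥C → Prop) with ho
  have hlt : ∀ o' < o, o'.card ≤ #X := by
    intro o' ho'
    obtain ⟨c, rfl⟩ := Ordinal.typein_surj _ ho'
    rw [Ordinal.card_typein]
    have hinj : Function.Injective
        (fun y : {y : ↥C // y < c} => (⟨y.val.val, le_of_lt y.2⟩ : Set.Iic c.val)) := by
      intro a b hab
      simp only [Subtype.mk.injEq] at hab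
      exact Subtype.ext (Subtype.ext (congrArg (Subtype.val : Set.Iic c.val → Y) hab))
    exact le_trans (Cardinal.mk_le_of_injective hinj) (hseg c.val)
  have hoC : o ≤ (Order.succ #X).ord := by
    by_contra h
    push_neg at h
    have := hlt _ h
    rw [Cardinal.card_ord] at this
    exact absurd this (not_le_of_gt (Order.lt_succ #X))
  have hCcard : #↥C ≤ Order.succ #X := by
    have : o.card ≤ ((Order.succ #X).ord).card := Ordinal.card_le_card hoC
    rwa [Cardinal.card_ord, ho, Ordinal.card_type] at this
  -- Y is the union of initial segments indexed by C
  have huniv : (Set.univ : Set Y) = ⋃ c : ↥C, Set.Iic c.val := by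
    ext y
    simp only [Set.mem_univ, Set.mem_iUnion, Set.mem_Iic, true_iff]
    obtain ⟨c, hc, hyc⟩ := hcof y
    exact ⟨⟨c, hc⟩, hyc⟩
  have hX : (ℵ₀ : Cardinal) ≤ #X := Cardinal.aleph0_le_mk X
  calc #Y = #(Set.univ : Set Y) := Cardinal.mk_univ.symm
    _ = #(⋃ c : ↥C, Set.Iic c.val) := by rw [huniv]
    _ ≤ #↥C * ⨆ c : ↥C, #(Set.Iic c.val) := Cardinal.mk_iUnion_le _
    _ ≤ Order.succ #X * #X :=
        mul_le_mul' hCcard (ciSup_le' fun c => hseg c.val)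
    _ ≤ Order.succ #X * Order.succ #X :=
        mul_le_mul' le_rfl (le_of_lt (Order.lt_succ _))
    _ = Order.succ #X := Cardinal.mul_eq_self (le_trans hX (le_of_lt (Order.lt_succ _)))
end

section
/- Let X be a linear order and Y a set equipped with a symmetric function f defined on pairs of distinct elements of Y with values in X, satisfying: for all pairwise distinct a₀, a₁, a₂ ∈ Y, if f(a₀,a₁) ≠ f(a₀,a₂) then f(a₁,a₂) = min(f(a₀,a₁), f(a₀,a₂)), and if f(a₀,a₁) = f(a₀,a₂) then f(a₁,a₂) > f(a₀,a₁). Then |Y| ≤ 2^|X|. -/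
open Cardinal

universe u

theorem stmt8 {X Y : Type u} [LinearOrder X] [Nontrivial Y] (f : Y → Y → X)
    (hsymm : ∀ a b : Y, a ≠ b → f a b = f b a)
    (hlaw : ∀ a₀ a₁ a₂ : Y, a₀ ≠ a₁ → a₀ ≠ a₂ → a₁ ≠ a₂ →
      (f a₀ a₁ ≠ f a₀ a₂ → f a₁ a₂ = min (f a₀ a₁) (f a₀ a₂)) ∧
      (f a₀ a₁ = f a₀ a₂ → f a₀ a₁ < f a₁ a₂)) :
    #Y ≤ 2 ^ #X := by
  classical
  -- "triangle inequality"
  have htrans : ∀ a b c : Y, a ≠ b → a ≠ c → b ≠ c →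
      min (f a b) (f a c) ≤ f b c := by
    intro a b c hab hac hbc
    rcases eq_or_ne (f a b) (f a c) with h | h
    · exact le_of_lt (lt_of_le_of_lt (min_le_left _ _) ((hlaw a b c hab hac hbc).2 h))
    · exact le_of_eq ((hlaw a b c hab hac hbc).1 h).symm
  have wf : WellFounded (WellOrderingRel : Y → Y → Prop) :=
    (WellOrderingRel.isWellOrder).toIsWellFounded.wf
  -- the class of y at level v
  set C : Y → X → Set Y := fun y v => {z : Y | z = y ∨ v ≤ f y z} with hC
  have hCne : ∀ y v, (C y v).Nonempty := fun y v => ⟨y, Or.inl rfl⟩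
  set m : Y → X → Y := fun y v => wf.min (C y v) (hCne y v) with hm
  have hm_mem : ∀ y v, m y v ∈ C y v := fun y v => wf.min_mem _ _
  set S : Y → Set X := fun y => {v | m y v ≠ y ∧ f y (m y v) = v} with hS
  -- class monotonicity under symmetry
  have hCsub : ∀ a b : Y, a ≠ b → C a (f a b) ⊆ C b (f a b) := by
    intro a b hab z hz
    by_cases hza : z = a
    · subst hza
      exact Or.inr (le_of_eq (hsymm z b hab))
    by_cases hzb : z = b
    · exact Or.inl hzb
    rcases hz with h | hfa
    · exact absurd h hza
    · refine Or.inr (le_trans ?_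
        (htrans a b z hab (fun h => hza h.symm) (fun h => hzb h.symm)))
      exact le_min (le_refl _) hfa
  have main : ∀ a b : Y, a ≠ b → S a ≠ S b := by
    intro a b hab hSS
    set v := f a b with hv
    have hvba : f b a = v := (hsymm a b hab).symm
    have hCeq : C a v = C b v := by
      apply Set.Subset.antisymm (hCsub a b hab)
      have := hCsub b a (Ne.symm hab)
      rwa [hvba] at this
    have hmin : ∀ (s t : Set Y) (hs : s.Nonempty) (ht : t.Nonempty), s = t →
        wf.min s hs = wf.min t ht := by rintro s t hs ht rfl; rfl
    have hmeq : m a v = m b v := hmin _ _ _ _ hCeq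
    have hma : m b v ∈ C a v := by rw [hCeq]; exact hm_mem b v
    by_cases hwa : m b v = a
    · -- v ∈ S b, v ∉ S a
      have h1 : v ∈ S b := ⟨by rw [hwa]; exact hab, by rw [hwa]; exact hvba⟩
      rw [← hSS] at h1
      exact h1.1 (hmeq.trans hwa)
    by_cases hwb : m b v = b
    · -- v ∈ S a, v ∉ S b
      have h1 : v ∈ S a := ⟨by rw [hmeq, hwb]; exact Ne.symm hab, by rw [hmeq, hwb]⟩
      rw [hSS] at h1
      exact h1.1 hwb
    have hfa : v ≤ f a (m b v) := hma.resolve_left hwa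
    have hfb : v ≤ f b (m b v) := (hm_mem b v).resolve_left hwb
    have hnotboth : ¬ (v < f a (m b v) ∧ v < f b (m b v)) := by
      rintro ⟨h1, h2⟩
      have := htrans (m b v) a b (fun h => hwa h) (fun h => hwb h) hab
      rw [← hsymm a (m b v) (fun h => hwa h.symm),
        ← hsymm b (m b v) (fun h => hwb h.symm)] at this
      exact absurd (lt_of_lt_of_le (lt_min h1 h2) this) (lt_irrefl v)
    have hnotbothEq : ¬ (f a (m b v) = v ∧ f b (m b v) = v) := by
      rintro ⟨h1, h2⟩
      have := (hlaw (m b v) a b (fun h => hwa h) (fun h => hwb h) hab).2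
        (by rw [← hsymm a (m b v) (fun h => hwa h.symm),
          ← hsymm b (m b v) (fun h => hwb h.symm), h1, h2])
      rw [← hsymm a (m b v) (fun h => hwa h.symm), h1] at this
      exact absurd this (lt_irrefl v)
    rcases lt_or_eq_of_le hfa with h1 | h1
    · rcases lt_or_eq_of_le hfb with h2 | h2
      · exact hnotboth ⟨h1, h2⟩
      · -- f b (m b v) = v : v ∈ S b, v ∉ S a
        have hmem : v ∈ S b := ⟨hwb, h2.symm⟩
        rw [← hSS] at hmem
        have := hmem.2
        rw [hmeq] at this
        exact absurd this (ne_of_gt h1)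
    · rcases lt_or_eq_of_le hfb with h2 | h2
      · -- f a (m b v) = v : v ∈ S a, v ∉ S b
        have hmem : v ∈ S a := ⟨by rw [hmeq]; exact hwa, by rw [hmeq]; exact h1.symm⟩
        rw [hSS] at hmem
        exact absurd hmem.2 (ne_of_gt h2)
      · exact hnotbothEq ⟨h1.symm, h2.symm⟩
  have hinj : Function.Injective S := by
    intro a b h
    by_contra hne
    exact main a b hne h
  calc #Y ≤ #(Set X) := mk_le_of_injective hinj
    _ = 2 ^ #X := mk_set
end

section
/- Let Y be a dense linear order without endpoints, X an infinite set, and g : X × Y → Y with g(x,y) ≤ y for all x,y and each g(·,y) surjective onto {z : z ≤ y}. If additionally |X| = κ for an infinite cardinal κ, then |Y| ≤ κ⁺, and there exist such X, Y, g with |Y| = κ⁺ (for example, take Y of order type a κ⁺-like dense order in which every initial segment has cardinality at most κ). -/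
open Cardinal Ordinal Set

universe u

noncomputable def chainFn {Y : Type u} [LinearOrder Y] [Nonempty Y] : Ordinal.{u} → Y :=
  Ordinal.lt_wf.fix fun α IH =>
    Classical.epsilon fun y : Y => ∀ β : Ordinal.{u}, ∀ hβ : β < α, IH β hβ < y

theorem chainFn_eq {Y : Type u} [LinearOrder Y] [Nonempty Y] (α : Ordinal.{u}) :
    chainFn α = Classical.epsilon fun y : Y => ∀ β : Ordinal.{u}, β < α → chainFn β < y := by
  rw [chainFn, Ordinal.lt_wf.fix_eq]

theorem chainFn_spec {Y : Type u} [LinearOrder Y] [Nonempty Y] {α : Ordinal.{u}}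
    (h : ∃ y : Y, ∀ β : Ordinal.{u}, β < α → (chainFn β : Y) < y) :
    ∀ β : Ordinal.{u}, β < α → (chainFn β : Y) < chainFn α := by
  rw [chainFn_eq]
  exact Classical.epsilon_spec h

theorem aux_bound {Y : Type u} [LinearOrder Y] (κ : Cardinal.{u}) (hκ : ℵ₀ ≤ κ)
    (h : ∀ y : Y, #(Set.Iic y) ≤ κ) : #Y ≤ Order.succ κ := by
  rcases isEmpty_or_nonempty Y with hY | hY
  · simp [mk_eq_zero Y]
  classical
  set good : Ordinal.{u} → Prop := fun α => ∃ y : Y, ∀ β : Ordinal.{u}, β < α → chainFn β < y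
    with hgood
  have hmono : ∀ {α β : Ordinal.{u}}, good α → β < α → chainFn β < (chainFn α : Y) :=
    fun hα hβα => chainFn_spec hα _ hβα
  -- some ordinal is not good
  have hne : {α : Ordinal.{u} | ¬ good α}.Nonempty := by
    by_contra hcon
    push_neg at hcon
    simp only [Set.not_nonempty_iff_eq_empty, Set.eq_empty_iff_forall_notMem,
      Set.mem_setOf_eq, not_not] at hcon
    set θ : Ordinal.{u} := (Order.succ #Y).ord with hθ
    have hinj : Function.Injective
        (fun t : θ.ToType => (chainFn (((Ordinal.ToType.mk (o := θ))).symm t : Ordinal.{u}) : Y)) := by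
      intro a b hab
      by_contra hne'
      have hne2 : (((Ordinal.ToType.mk (o := θ))).symm a : Ordinal.{u}) ≠ (((Ordinal.ToType.mk (o := θ))).symm b : Ordinal.{u}) := by
        intro heq
        exact hne' (((Ordinal.ToType.mk (o := θ))).symm.injective (Subtype.ext heq))
      rcases hne2.lt_or_gt with h' | h'
      · exact absurd hab (ne_of_lt (hmono (hcon _) h'))
      · exact absurd hab.symm (ne_of_lt (hmono (hcon _) h'))
    have := mk_le_of_injective hinj
    rw [mk_toType, card_ord] at this
    exact absurd this (not_le.mpr (Order.lt_succ #Y))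
  set δ : Ordinal.{u} := sInf {α : Ordinal.{u} | ¬ good α} with hδdef
  have hδ : ¬ good δ := csInf_mem hne
  have hlt : ∀ β : Ordinal.{u}, β < δ → good β := by
    intro β hβ
    by_contra hb
    exact absurd hβ (not_lt.mpr (csInf_le' hb))
  -- f is injective (hence strictly monotone) below δ
  have hinjδ : ∀ {β γ : Ordinal.{u}}, β < δ → γ < δ → (chainFn β : Y) = chainFn γ → β = γ := by
    intro β γ hβ hγ heq
    by_contra hne'
    rcases Ne.lt_or_gt hne' with h' | h'
    · exact absurd heq (ne_of_lt (hmono (hlt _ hγ) h'))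
    · exact absurd heq.symm (ne_of_lt (hmono (hlt _ hβ) h'))
  -- cofinality of the chain
  have hcof : ∀ y : Y, ∃ β : Ordinal.{u}, β < δ ∧ y ≤ chainFn β := by
    intro y
    by_contra hcon
    push_neg at hcon
    exact hδ ⟨y, fun β hβ => hcon β hβ⟩
  -- card bound on ordinals below δ
  have hcard : ∀ β : Ordinal.{u}, β < δ → β.card ≤ κ := by
    intro β hβ
    have hgβ : good β := hlt β hβ
    have hinj : Function.Injective
        (fun t : β.ToType => (⟨chainFn (((Ordinal.ToType.mk (o := β))).symm t : Ordinal.{u}),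
          le_of_lt (hmono hgβ (((Ordinal.ToType.mk (o := β))).symm t).2)⟩ :
          Set.Iic (chainFn β : Y))) := by
      intro a b hab
      simp only [Subtype.mk.injEq] at hab
      have := hinjδ (lt_trans (((Ordinal.ToType.mk (o := β))).symm a).2 hβ)
        (lt_trans (Set.mem_Iio.mp (((Ordinal.ToType.mk (o := β))).symm b).2) hβ) (congrArg Subtype.val hab)
      exact ((Ordinal.ToType.mk (o := β))).symm.injective (Subtype.ext this)
    have := mk_le_of_injective hinj
    rw [mk_toType] at this
    exact this.trans (h _)
  have hδle : δ ≤ (Order.succ κ).ord := by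
    by_contra hcon
    push_neg at hcon
    have := hcard _ hcon
    rw [card_ord] at this
    exact absurd this (not_le.mpr (Order.lt_succ κ))
  -- cover Y by the Iic's
  set F : δ.ToType → Y := fun t => chainFn (((Ordinal.ToType.mk (o := δ))).symm t : Ordinal.{u}) with hF
  have hcov : ∀ y : Y, ∃ t : δ.ToType, y ≤ F t := by
    intro y
    obtain ⟨β, hβ, hy⟩ := hcof y
    refine ⟨(Ordinal.ToType.mk (o := δ)) ⟨β, hβ⟩, ?_⟩
    rw [hF]
    simp only [OrderIso.symm_apply_apply]
    exact hy
  have hsub : (Set.univ : Set Y) ⊆ ⋃ t : δ.ToType, Set.Iic (F t) := by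
    intro y _
    obtain ⟨t, ht⟩ := hcov y
    exact Set.mem_iUnion.2 ⟨t, ht⟩
  have h1 : #Y ≤ #(⋃ t : δ.ToType, Set.Iic (F t)) := by
    have := mk_le_mk_of_subset hsub
    rwa [mk_univ] at this
  have h2 : #(⋃ t : δ.ToType, Set.Iic (F t)) ≤ Cardinal.sum fun t : δ.ToType => #(Set.Iic (F t)) :=
    mk_iUnion_le_sum_mk
  have h3 : (Cardinal.sum fun t : δ.ToType => #(Set.Iic (F t))) ≤
      Cardinal.sum fun _ : δ.ToType => κ := Cardinal.sum_le_sum _ _ fun t => h (F t)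
  have h4 : (Cardinal.sum fun _ : δ.ToType => κ) = #δ.ToType * κ := sum_const' _ _
  have h5 : #δ.ToType * κ ≤ Order.succ κ * κ := by
    refine mul_le_mul' ?_ le_rfl
    rw [mk_toType]
    exact (Ordinal.card_le_card hδle).trans (card_ord _).le
  have h6 : Order.succ κ * κ = Order.succ κ := by
    rw [mul_eq_max (hκ.trans (Order.le_succ κ)) hκ]
    exact max_eq_left (Order.le_succ κ)
  calc #Y ≤ _ := h1
    _ ≤ _ := h2
    _ ≤ _ := h3
    _ = _ := h4
    _ ≤ _ := h5
    _ = _ := h6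

theorem aux_exists (κ : Cardinal.{u}) (hκ : ℵ₀ ≤ κ) :
    ∃ (X' Y' : Type u) (r : Y' → Y' → Prop) (g' : X' → Y' → Y'),
      IsStrictTotalOrder Y' r ∧
      (∀ a b : Y', r a b → ∃ c : Y', r a c ∧ r c b) ∧
      (∀ a : Y', ∃ b : Y', r b a) ∧
      (∀ a : Y', ∃ b : Y', r a b) ∧
      (∀ (x : X') (y : Y'), g' x y = y ∨ r (g' x y) y) ∧
      (∀ y z : Y', (z = y ∨ r z y) → ∃ x : X', g' x y = z) ∧
      #X' = κ ∧ #Y' = Order.succ κ := by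
  classical
  set A : Type u := (Order.succ κ).ord.ToType with hA
  set Q : Type u := ULift.{u, 0} ℚ with hQ
  set Y' : Type u := A ×ₗ Q with hY'
  set X' : Type u := κ.out with hX'
  have hsucc : ℵ₀ ≤ Order.succ κ := hκ.trans (Order.le_succ κ)
  -- cardinality of initial segments
  have hIicA : ∀ a : A, #(Set.Iic a) ≤ κ := by
    intro a
    have h1 : (Set.Iic a : Set A) = Set.Iio a ∪ {a} := (Set.Iio_union_right).symm
    have h2 : #(Set.Iic a) ≤ #(Set.Iio a) + #({a} : Set A) := h1 ▸ mk_union_le _ _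
    have h3 : #(Set.Iio a) ≤ κ := by
      have := mk_Iio_ord_toType a
      exact (Order.lt_succ_iff).mp this
    calc #(Set.Iic a) ≤ #(Set.Iio a) + #({a} : Set A) := h2
      _ ≤ κ + 1 := by rw [mk_singleton]; exact add_le_add h3 le_rfl
      _ = κ := add_one_eq hκ
  have hIic : ∀ y : Y', #(Set.Iic y) ≤ κ := by
    intro y
    have hle : ∀ z : Set.Iic y, (ofLex z.1).1 ≤ (ofLex y).1 := by
      rintro ⟨z, hz⟩
      rcases Prod.Lex.le_iff.mp hz with h' | ⟨h', _⟩
      · exact le_of_lt h'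
      · exact le_of_eq h'
    have hinj : Function.Injective (fun z : Set.Iic y =>
        ((⟨(ofLex z.1).1, hle z⟩ : Set.Iic (ofLex y).1), ((ofLex z.1).2 : Q))) := by
      rintro ⟨z1, hz1⟩ ⟨z2, hz2⟩ hz
      simp only [Prod.mk.injEq, Subtype.mk.injEq] at hz
      apply Subtype.ext
      exact congrArg toLex (Prod.ext (congrArg Subtype.val hz.1) hz.2)
    calc #(Set.Iic y) ≤ #(Set.Iic (ofLex y).1 × Q) := mk_le_of_injective hinj
      _ = #(Set.Iic (ofLex y).1) * #Q := (mul_def _ _).symm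
      _ ≤ κ * ℵ₀ := by
          refine mul_le_mul' (hIicA _) ?_
          rw [hQ, mk_uLift]
          simp
      _ = κ := by rw [mul_eq_max hκ le_rfl]; exact max_eq_left hκ
  -- the surjections
  have hemb : ∀ y : Y', Nonempty (Set.Iic y ↪ X') := by
    intro y
    refine (Cardinal.le_def _ _).mp ?_
    rw [hX', mk_out]
    exact hIic y
  have hne : ∀ y : Y', Nonempty (Set.Iic y) := fun y => ⟨⟨y, le_refl y⟩⟩
  set e : ∀ y : Y', Set.Iic y ↪ X' := fun y => (hemb y).some with he
  set g' : X' → Y' → Y' := fun x y =>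
    ((@Function.invFun _ _ (hne y) (e y) x : Set.Iic y) : Y') with hg'
  have hgle : ∀ (x : X') (y : Y'), g' x y ≤ y := fun x y =>
    (@Function.invFun _ _ (hne y) (e y) x).2
  have hgsurj : ∀ y z : Y', z ≤ y → ∃ x : X', g' x y = z := by
    intro y z hz
    obtain ⟨x, hx⟩ := @Function.invFun_surjective _ _ (hne y) _ (e y).injective ⟨z, hz⟩
    exact ⟨x, by rw [hg']; simp only; rw [hx]⟩
  refine ⟨X', Y', (· < ·), g', inferInstance, ?_, ?_, ?_, ?_, ?_, by rw [hX', mk_out], ?_⟩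
  · -- dense
    intro a b hab
    rcases Prod.Lex.lt_iff.mp hab with h' | ⟨h1, h2⟩
    · refine ⟨toLex ((ofLex a).1, ULift.up ((ofLex a).2.down + 1)), ?_, ?_⟩
      · refine Prod.Lex.lt_iff.mpr (Or.inr ⟨rfl, ?_⟩)
        show (ofLex a).2.down < (ofLex a).2.down + 1
        exact lt_add_one _
      · exact Prod.Lex.lt_iff.mpr (Or.inl h')
    · obtain ⟨q, hq1, hq2⟩ := exists_between (show ((ofLex a).2).down < ((ofLex b).2).down from h2)
      refine ⟨toLex ((ofLex a).1, ULift.up q), ?_, ?_⟩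
      · exact Prod.Lex.lt_iff.mpr (Or.inr ⟨rfl, hq1⟩)
      · exact Prod.Lex.lt_iff.mpr (Or.inr ⟨h1.symm ▸ rfl, hq2⟩)
  · -- no min
    intro a
    refine ⟨toLex ((ofLex a).1, ULift.up ((ofLex a).2.down - 1)), ?_⟩
    refine Prod.Lex.lt_iff.mpr (Or.inr ⟨rfl, ?_⟩)
    show (ofLex a).2.down - 1 < (ofLex a).2.down
    exact sub_one_lt _
  · -- no max
    intro a
    refine ⟨toLex ((ofLex a).1, ULift.up ((ofLex a).2.down + 1)), ?_⟩
    refine Prod.Lex.lt_iff.mpr (Or.inr ⟨rfl, ?_⟩)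
    show (ofLex a).2.down < (ofLex a).2.down + 1
    exact lt_add_one _
  · intro x y
    exact eq_or_lt_of_le (hgle x y)
  · intro y z hz
    refine hgsurj y z ?_
    rcases hz with rfl | hz
    · exact le_refl _
    · exact le_of_lt hz
  · -- cardinality of Y'
    have : #Y' = #A * #Q := by
      rw [hY']
      rw [mul_def]
      rfl
    rw [this, hA, mk_toType, card_ord, hQ, mk_uLift]
    rw [show lift.{u} #ℚ = ℵ₀ by simp]
    rw [mul_eq_max hsucc le_rfl]
    exact max_eq_left hsucc

theorem stmt14 {X Y : Type u} [Infinite X] [LinearOrder Y] [DenselyOrdered Y]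
    [NoMinOrder Y] [NoMaxOrder Y] (g : X → Y → Y)
    (h1 : ∀ (x : X) (y : Y), g x y ≤ y)
    (h2 : ∀ y z : Y, z ≤ y → ∃ x : X, g x y = z)
    (κ : Cardinal.{u}) (hκ : ℵ₀ ≤ κ) (hX : #X = κ) :
    #Y ≤ Order.succ κ ∧
    ∃ (X' Y' : Type u) (r : Y' → Y' → Prop) (g' : X' → Y' → Y'),
      IsStrictTotalOrder Y' r ∧
      (∀ a b : Y', r a b → ∃ c : Y', r a c ∧ r c b) ∧
      (∀ a : Y', ∃ b : Y', r b a) ∧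
      (∀ a : Y', ∃ b : Y', r a b) ∧
      (∀ (x : X') (y : Y'), g' x y = y ∨ r (g' x y) y) ∧
      (∀ y z : Y', (z = y ∨ r z y) → ∃ x : X', g' x y = z) ∧
      #X' = κ ∧ #Y' = Order.succ κ := by
  constructor
  · refine aux_bound κ hκ ?_
    intro y
    have hs : Function.Surjective (fun x : X => (⟨g x y, h1 x y⟩ : Set.Iic y)) := by
      rintro ⟨z, hz⟩
      obtain ⟨x, hx⟩ := h2 y z hz
      exact ⟨x, Subtype.ext hx⟩
    have := mk_le_of_surjective hs
    rwa [hX] at this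
  · exact aux_exists κ hκ
end
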